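/- arXiv:alg-geom/9601022 — 2 statements merged into one kernel-verified Lean document; each statement's English description precedes it below -/
import Mathlib

section
/- Fix an integer n ≥ 3 and let τ be a column tabloid for the universal three-row diagram D₃ which is NOT maximally degenerate, i.e. not of the form τ({1}) = τ({2}) = τ({3}) = {i}, τ({1,2}) = τ({2,3}) = τ({1,3}) = {i,j}, τ({1,2,3}) = {i,j,k} for distinct i, j, k. Then the sum of d_{ab}(τ) over all ordered pairs of distinct a, b ∈ {1,…,n} equals 3n − 3. -/
/-- Nonempty subsets of `{1,2,3}` (modeled as `Fin 3`): the columns of the universal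
three-row diagram `D₃`. -/
abbrev NE3 : Type := {C : Finset (Fin 3) // C.Nonempty}

/-- A column tabloid for the universal three-row diagram `D₃`: an assignment of a
subset `τ(C) ⊆ {1,…,n}` with `|τ(C)| = |C|` to each nonempty `C ⊆ {1,2,3}`, monotone
with respect to inclusion. -/
def IsTabloid (n : ℕ) (τ : NE3 → Finset (Fin n)) : Prop :=
  (∀ C : NE3, (τ C).card = C.1.card) ∧
  ∀ C C' : NE3, C.1 ⊆ C'.1 → τ C ⊆ τ C'

/-- The graph whose vertices are the nonempty columns `C` of `D₃` with
`a ∈ τ(C)` and `b ∉ τ(C)`, two columns being adjacent iff one strictly contains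
the other. -/
def dGraph (n : ℕ) (τ : NE3 → Finset (Fin n)) (a b : Fin n) :
    SimpleGraph {C : NE3 // a ∈ τ C ∧ b ∉ τ C} where
  Adj C C' := C.1.1 ⊂ C'.1.1 ∨ C'.1.1 ⊂ C.1.1
  symm := ⟨fun C C' h => h.symm⟩
  loopless := ⟨fun C h => by
    rcases h with h | h <;> exact (lt_irrefl C.1.1 h)⟩

/-- `d_{ab}(τ)`: the number of connected components of the graph `dGraph`. -/
noncomputable def dval (n : ℕ) (τ : NE3 → Finset (Fin n)) (a b : Fin n) : ℕ :=
  Nat.card (dGraph n τ a b).ConnectedComponent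

/-- `τ` is the maximally degenerate tabloid `τ_{ijk}`:
`τ({1}) = τ({2}) = τ({3}) = {i}`, `τ({1,2}) = τ({2,3}) = τ({1,3}) = {i,j}`,
`τ({1,2,3}) = {i,j,k}` for distinct `i, j, k`. -/
def IsMaxDeg (n : ℕ) (τ : NE3 → Finset (Fin n)) (i j k : Fin n) : Prop :=
  i ≠ j ∧ j ≠ k ∧ i ≠ k ∧
  τ ⟨{0}, Finset.singleton_nonempty 0⟩ = {i} ∧
  τ ⟨{1}, Finset.singleton_nonempty 1⟩ = {i} ∧
  τ ⟨{2}, Finset.singleton_nonempty 2⟩ = {i} ∧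
  τ ⟨{0, 1}, Finset.insert_nonempty 0 {1}⟩ = {i, j} ∧
  τ ⟨{1, 2}, Finset.insert_nonempty 1 {2}⟩ = {i, j} ∧
  τ ⟨{0, 2}, Finset.insert_nonempty 0 {2}⟩ = {i, j} ∧
  τ ⟨{0, 1, 2}, Finset.insert_nonempty 0 {1, 2}⟩ = {i, j, k}

open scoped Classical in
/-- `e_{ab}(τ)`: equal to `d_{ab}(τ)`, except that for a maximally degenerate tabloid
`τ_{ijk}` one sets `e_{ik}(τ_{ijk}) = 0`. -/
noncomputable def eval' (n : ℕ) (τ : NE3 → Finset (Fin n)) (a b : Fin n) : ℕ :=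
  if ∃ j : Fin n, IsMaxDeg n τ a j b then 0 else dval n τ a b

/-! ### Auxiliary material -/

instance dAdjDec (n : ℕ) (τ : NE3 → Finset (Fin n)) (a b : Fin n) :
    DecidableRel (dGraph n τ a b).Adj := fun C C' =>
  inferInstanceAs (Decidable (C.1.1 ⊂ C'.1.1 ∨ C'.1.1 ⊂ C.1.1))

/-- The seven columns. -/
def c0 : NE3 := ⟨{0}, Finset.singleton_nonempty 0⟩
def c1 : NE3 := ⟨{1}, Finset.singleton_nonempty 1⟩
def c2 : NE3 := ⟨{2}, Finset.singleton_nonempty 2⟩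
def c01 : NE3 := ⟨{0, 1}, Finset.insert_nonempty 0 {1}⟩
def c12 : NE3 := ⟨{1, 2}, Finset.insert_nonempty 1 {2}⟩
def c02 : NE3 := ⟨{0, 2}, Finset.insert_nonempty 0 {2}⟩
def cT : NE3 := ⟨{0, 1, 2}, Finset.insert_nonempty 0 {1, 2}⟩

/-- A tabloid over `Fin 3`, built from the values `s` on singleton columns and
the elements `m` missing from the pair columns. -/
def bld (s m : Fin 3 → Fin 3) : NE3 → Finset (Fin 3) := fun C =>
  if C.1 = {0} then {s 0} else if C.1 = {1} then {s 1} else if C.1 = {2} then {s 2}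
  else if C.1 = {0, 1} then Finset.univ.erase (m 0)
  else if C.1 = {1, 2} then Finset.univ.erase (m 1)
  else if C.1 = {0, 2} then Finset.univ.erase (m 2) else Finset.univ

set_option maxHeartbeats 16000000 in
set_option maxRecDepth 100000 in
theorem core : ∀ s m : Fin 3 → Fin 3,
    ((∀ C : NE3, ((bld s m) C).card = C.1.card) ∧
      ∀ C C' : NE3, C.1 ⊆ C'.1 → (bld s m) C ⊆ (bld s m) C') →
    ¬(s 0 = s 1 ∧ s 1 = s 2 ∧ m 0 = m 1 ∧ m 1 = m 2) →
    ∑ p ∈ (Finset.univ : Finset (Fin 3)).offDiag,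
      Fintype.card (dGraph 3 (bld s m) p.1 p.2).ConnectedComponent = 6 := by decide

lemma NE3_cases (C : NE3) : C.1 = {0} ∨ C.1 = {1} ∨ C.1 = {2} ∨ C.1 = {0, 1} ∨
    C.1 = {1, 2} ∨ C.1 = {0, 2} ∨ C.1 = {0, 1, 2} := by
  have h : ∀ c : Finset (Fin 3), c.Nonempty → (c = {0} ∨ c = {1} ∨ c = {2} ∨ c = {0, 1} ∨
      c = {1, 2} ∨ c = {0, 2} ∨ c = {0, 1, 2}) := by decide
  exact h C.1 C.2

lemma key (σ : NE3 → Finset (Fin 3)) (hσ : IsTabloid 3 σ)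
    (hnd : ¬ ∃ i j k : Fin 3, IsMaxDeg 3 σ i j k) :
    ∑ p ∈ (Finset.univ : Finset (Fin 3)).offDiag, dval 3 σ p.1 p.2 = 6 := by
  obtain ⟨hcard, hmono⟩ := hσ
  obtain ⟨s0, hs0⟩ := Finset.card_eq_one.mp ((hcard c0).trans (by decide))
  obtain ⟨s1, hs1⟩ := Finset.card_eq_one.mp ((hcard c1).trans (by decide))
  obtain ⟨s2, hs2⟩ := Finset.card_eq_one.mp ((hcard c2).trans (by decide))
  have hp : ∀ C : NE3, C.1.card = 2 → ∃ d, σ C = Finset.univ.erase d := by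
    intro C h2
    have hc : (σ C)ᶜ.card = 1 := by
      rw [Finset.card_compl, hcard C, h2, Fintype.card_fin]
    obtain ⟨d, hd⟩ := Finset.card_eq_one.mp hc
    exact ⟨d, by rw [← compl_compl (σ C), hd, Finset.compl_singleton]⟩
  obtain ⟨m0, hm0⟩ := hp c01 (by decide)
  obtain ⟨m1, hm1⟩ := hp c12 (by decide)
  obtain ⟨m2, hm2⟩ := hp c02 (by decide)
  have htopv : σ cT = Finset.univ :=
    Finset.eq_univ_of_card _ ((hcard cT).trans (by decide))
  have bc0 : ∀ s m : Fin 3 → Fin 3, bld s m c0 = {s 0} := fun s m => by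
    simp only [bld, c0]; simp
  have bc1 : ∀ s m : Fin 3 → Fin 3, bld s m c1 = {s 1} := fun s m => by
    simp only [bld, c1]; simp
  have bc2 : ∀ s m : Fin 3 → Fin 3, bld s m c2 = {s 2} := fun s m => by
    simp only [bld, c2]; simp
  have bc01 : ∀ s m : Fin 3 → Fin 3, bld s m c01 = Finset.univ.erase (m 0) := fun s m => by
    simp only [bld, c01]; simp
    rw [if_neg (by decide), if_neg (by decide)]
  have bc12 : ∀ s m : Fin 3 → Fin 3, bld s m c12 = Finset.univ.erase (m 1) := fun s m => by
    simp only [bld, c12]; simp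
    rw [if_neg (by decide), if_neg (by decide), if_neg (by decide)]
  have bc02 : ∀ s m : Fin 3 → Fin 3, bld s m c02 = Finset.univ.erase (m 2) := fun s m => by
    simp only [bld, c02]; simp
    rw [if_neg (by decide), if_neg (by decide), if_neg (by decide), if_neg (by decide)]
  have bcT : ∀ s m : Fin 3 → Fin 3, bld s m cT = Finset.univ := fun s m => by
    simp only [bld, cT]; simp
    rw [if_neg (by decide), if_neg (by decide), if_neg (by decide), if_neg (by decide)]
    exact if_neg (by decide)
  have hfun : σ = bld ![s0, s1, s2] ![m0, m1, m2] := by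
    funext C
    rcases NE3_cases C with h | h | h | h | h | h | h
    · rw [show C = c0 from Subtype.ext h, hs0, bc0]; simp
    · rw [show C = c1 from Subtype.ext h, hs1, bc1]; simp
    · rw [show C = c2 from Subtype.ext h, hs2, bc2]; simp
    · rw [show C = c01 from Subtype.ext h, hm0, bc01]; simp
    · rw [show C = c12 from Subtype.ext h, hm1, bc12]; simp
    · rw [show C = c02 from Subtype.ext h, hm2, bc02]; simp
    · rw [show C = cT from Subtype.ext h, htopv, bcT]
  have hnd' : ¬(s0 = s1 ∧ s1 = s2 ∧ m0 = m1 ∧ m1 = m2) := by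
    rintro ⟨e1, e2, e3, e4⟩
    have hsm : s0 ≠ m0 := by
      have hsub := hmono c0 c01 (by decide)
      rw [hs0, hm0] at hsub
      have := hsub (Finset.mem_singleton_self s0)
      exact (Finset.mem_erase.mp this).1
    have hex : ∀ i k : Fin 3, i ≠ k → ∃ j, (i ≠ j ∧ j ≠ k ∧ i ≠ k) ∧
        ({i, j} : Finset (Fin 3)) = Finset.univ.erase k ∧
        ({i, j, k} : Finset (Fin 3)) = Finset.univ := by decide
    obtain ⟨j, ⟨hj1, hj2, hj3⟩, hjp, hjt⟩ := hex s0 m0 hsm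
    exact hnd ⟨s0, j, m0, hj1, hj2, hj3,
      hs0, e1 ▸ hs1, (e1.trans e2) ▸ hs2,
      hm0.trans hjp.symm, (e3 ▸ hm1).trans hjp.symm, ((e3.trans e4) ▸ hm2).trans hjp.symm,
      htopv.trans hjt.symm⟩
  have hconv : ∀ p ∈ (Finset.univ : Finset (Fin 3)).offDiag, dval 3 σ p.1 p.2 =
      Fintype.card (dGraph 3 (bld ![s0, s1, s2] ![m0, m1, m2]) p.1 p.2).ConnectedComponent := by
    intro p _
    rw [hfun, dval, Nat.card_eq_fintype_card]
  rw [Finset.sum_congr rfl hconv]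
  refine core _ _ ⟨?_, ?_⟩ ?_
  · intro C; rw [← hfun]; exact hcard C
  · intro C C' hCC; rw [← hfun]; exact hmono C C' hCC
  · simpa using hnd'

/-- For any column tabloid `τ` for the universal three-row diagram `D₃` which is not
maximally degenerate, the sum of `d_{ab}(τ)` over all ordered pairs of distinct
`a, b ∈ {1,…,n}` equals `3n − 3`. -/
theorem dval_sum_of_not_maxDeg (n : ℕ) (hn : 3 ≤ n)
    (τ : NE3 → Finset (Fin n)) (hτ : IsTabloid n τ)
    (h : ¬ ∃ i j k : Fin n, IsMaxDeg n τ i j k) :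
    ∑ p ∈ (Finset.univ : Finset (Fin n)).offDiag, dval n τ p.1 p.2 = 3 * n - 3 := by
  classical
  obtain ⟨hcard, hmono⟩ := hτ
  have hsubtop : ∀ C : NE3, C.1 ⊆ cT.1 := by
    intro C x _
    have huniv : (cT.1 : Finset (Fin 3)) = Finset.univ := by decide
    rw [huniv]; exact Finset.mem_univ x
  set T := τ cT with hT
  have hTsub : ∀ C : NE3, τ C ⊆ T := fun C => hmono C cT (hsubtop C)
  have hTcard : T.card = 3 := (hcard cT).trans (by decide)
  -- a ∉ T : empty graph
  have hA : ∀ a b : Fin n, a ∉ T → dval n τ a b = 0 := by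
    intro a b ha
    haveI hE : IsEmpty {C : NE3 // a ∈ τ C ∧ b ∉ τ C} := ⟨fun C => ha (hTsub C.1 C.2.1)⟩
    haveI : IsEmpty (dGraph n τ a b).ConnectedComponent := ⟨fun c => by
      obtain ⟨v, _⟩ := c.exists_rep; exact isEmptyElim v⟩
    exact Nat.card_of_isEmpty
  -- a ∈ T, b ∉ T : connected nonempty graph
  have hB : ∀ a b : Fin n, a ∈ T → b ∉ T → dval n τ a b = 1 := by
    intro a b ha hb
    have hbC : ∀ C : NE3, b ∉ τ C := fun C hmem => hb (hTsub C hmem)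
    have hvt : a ∈ τ cT ∧ b ∉ τ cT := ⟨ha, hbC cT⟩
    set vt : {C : NE3 // a ∈ τ C ∧ b ∉ τ C} := ⟨cT, hvt⟩ with hvtd
    have hreach : ∀ v, (dGraph n τ a b).Reachable v vt := by
      intro v
      by_cases hv : v.1.1 = cT.1
      · rw [show v = vt from Subtype.ext (Subtype.ext hv)]
      · exact SimpleGraph.Adj.reachable
          (Or.inl (Finset.ssubset_iff_subset_ne.mpr ⟨hsubtop v.1, hv⟩))
    have hpre : (dGraph n τ a b).Preconnected := fun u v =>
      (hreach u).trans (hreach v).symm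
    rw [dval, Nat.card_eq_one_iff_unique]
    exact ⟨hpre.subsingleton_connectedComponent, ⟨(dGraph n τ a b).connectedComponentMk vt⟩⟩
  -- transport to Fin 3
  set e := T.orderIsoOfFin hTcard with he
  set g : Fin 3 → Fin n := fun t => (e t : Fin n) with hgd
  have hg : Function.Injective g := fun x y hxy => e.injective (Subtype.ext hxy)
  have hgT : ∀ t, g t ∈ T := fun t => (e t).2
  have hsurj : ∀ x ∈ T, ∃ t, g t = x := by
    intro x hx
    exact ⟨e.symm ⟨x, hx⟩, by simp [hgd]⟩
  set σ : NE3 → Finset (Fin 3) := fun C => Finset.univ.filter (fun t => g t ∈ τ C) with hσd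
  have hmem : ∀ (t : Fin 3) (C : NE3), t ∈ σ C ↔ g t ∈ τ C := by
    intro t C; simp [hσd]
  have himg : ∀ C : NE3, (σ C).image g = τ C := by
    intro C; ext x
    simp only [Finset.mem_image]
    constructor
    · rintro ⟨t, ht, rfl⟩; exact (hmem t C).mp ht
    · intro hx
      obtain ⟨t, rfl⟩ := hsurj x (hTsub C hx)
      exact ⟨t, (hmem t C).mpr hx, rfl⟩
  have hσtab : IsTabloid 3 σ := by
    constructor
    · intro C
      rw [← hcard C, ← himg C, Finset.card_image_of_injective _ hg]
    · intro C C' hCC t ht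
      exact (hmem t C').mpr (hmono C C' hCC ((hmem t C).mp ht))
  have hσnd : ¬ ∃ i j k : Fin 3, IsMaxDeg 3 σ i j k := by
    rintro ⟨i, j, k, hij, hjk, hik, h1, h2, h3, h4, h5, h6, h7⟩
    refine h ⟨g i, g j, g k, hg.ne hij, hg.ne hjk, hg.ne hik, ?_, ?_, ?_, ?_, ?_, ?_, ?_⟩
    · rw [← himg, h1, Finset.image_singleton]
    · rw [← himg, h2, Finset.image_singleton]
    · rw [← himg, h3, Finset.image_singleton]
    · rw [← himg, h4]; simp
    · rw [← himg, h5]; simp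
    · rw [← himg, h6]; simp
    · rw [← himg, h7]; simp
  have hdv : ∀ a b : Fin 3, dval n τ (g a) (g b) = dval 3 σ a b := by
    intro a b
    have hiff : ∀ C : NE3, (g a ∈ τ C ∧ g b ∉ τ C) ↔ (a ∈ σ C ∧ b ∉ σ C) := by
      intro C; rw [hmem, hmem]
    have φ : dGraph n τ (g a) (g b) ≃g dGraph 3 σ a b :=
      ⟨Equiv.subtypeEquivRight hiff, Iff.rfl⟩
    exact Nat.card_congr φ.connectedComponentEquiv
  have hTsum : ∑ p ∈ T.offDiag, dval n τ p.1 p.2 = 6 := by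
    have himgOff : ((Finset.univ : Finset (Fin 3)).offDiag).image
        (fun p => (g p.1, g p.2)) = T.offDiag := by
      ext q
      simp only [Finset.mem_image, Finset.mem_offDiag, Finset.mem_univ, true_and]
      constructor
      · rintro ⟨⟨x, y⟩, hxy, rfl⟩
        exact ⟨hgT x, hgT y, fun hh => hxy (hg hh)⟩
      · rintro ⟨hq1, hq2, hqne⟩
        obtain ⟨x, hx⟩ := hsurj q.1 hq1
        obtain ⟨y, hy⟩ := hsurj q.2 hq2
        exact ⟨(x, y), fun hh => hqne (by rw [← hx, ← hy]; exact congrArg g hh),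
          Prod.ext hx hy⟩
    rw [← himgOff, Finset.sum_image (by
      intro p _ q _ hpq
      have h1 := congrArg Prod.fst hpq
      have h2 := congrArg Prod.snd hpq
      exact Prod.ext (hg h1) (hg h2))]
    rw [Finset.sum_congr rfl (fun p _ => hdv p.1 p.2)]
    exact key σ hσtab hσnd
  -- assemble
  rw [← Finset.sum_filter_add_sum_filter_not ((Finset.univ : Finset (Fin n)).offDiag)
    (fun p => p.1 ∈ T)]
  have hz : ∑ p ∈ ((Finset.univ : Finset (Fin n)).offDiag).filter (fun p => ¬ p.1 ∈ T),
      dval n τ p.1 p.2 = 0 :=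
    Finset.sum_eq_zero (fun p hp => hA _ _ (Finset.mem_filter.mp hp).2)
  rw [hz, add_zero, ← Finset.sum_filter_add_sum_filter_not
    (((Finset.univ : Finset (Fin n)).offDiag).filter (fun p => p.1 ∈ T)) (fun p => p.2 ∈ T)]
  have h1 : ((((Finset.univ : Finset (Fin n)).offDiag).filter (fun p => p.1 ∈ T)).filter
      (fun p => p.2 ∈ T)) = T.offDiag := by
    ext p
    simp only [Finset.mem_filter, Finset.mem_offDiag, Finset.mem_univ, true_and]
    tauto
  have h2 : ((((Finset.univ : Finset (Fin n)).offDiag).filter (fun p => p.1 ∈ T)).filter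
      (fun p => ¬ p.2 ∈ T)) = T ×ˢ Tᶜ := by
    ext p
    simp only [Finset.mem_filter, Finset.mem_offDiag, Finset.mem_univ, true_and,
      Finset.mem_product, Finset.mem_compl]
    constructor
    · rintro ⟨⟨_, hp1⟩, hp2⟩; exact ⟨hp1, hp2⟩
    · rintro ⟨hp1, hp2⟩
      exact ⟨⟨fun he => hp2 (he ▸ hp1), hp1⟩, hp2⟩
  rw [h1, h2, hTsum]
  have h3 : ∑ p ∈ T ×ˢ Tᶜ, dval n τ p.1 p.2 = 3 * (n - 3) := by
    rw [Finset.sum_congr rfl (fun p hp => hB p.1 p.2 (Finset.mem_product.mp hp).1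
      (Finset.mem_compl.mp (Finset.mem_product.mp hp).2))]
    rw [Finset.sum_const, Finset.card_product, Finset.card_compl, hTcard,
      Fintype.card_fin, smul_eq_mul, mul_one]
  rw [h3]
  omega
end

section
/- In the polynomial ring R = ℂ[a₁, a₂, a₃, b₁, b₂, b₃, c₁, c₂, c₃, d₁, d₂, d₃] (i.e. MvPolynomial (Fin 12) ℂ), the ideal I generated by the six incidence polynomials c₂ + a₁d₂ + b₁, c₃ + a₁d₃ + b₁, c₁ + a₂d₁ + b₂, c₃ + a₂d₃ + b₂, c₁ + a₃d₁ + b₃, c₂ + a₃d₂ + b₃ is a prime ideal. -/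
set_option maxHeartbeats 1000000
set_option synthInstance.maxHeartbeats 400000


open MvPolynomial

/-- The incidence ideal of the space of triangles `I₃,₃` in affine coordinates.
The variables of `MvPolynomial (Fin 12) ℂ` are identified as
`0 ↦ a₁`, `1 ↦ a₂`, `2 ↦ a₃`, `3 ↦ b₁`, `4 ↦ b₂`, `5 ↦ b₃`,
`6 ↦ c₁`, `7 ↦ c₂`, `8 ↦ c₃`, `9 ↦ d₁`, `10 ↦ d₂`, `11 ↦ d₃`. -/
noncomputable def incidenceIdeal : Ideal (MvPolynomial (Fin 12) ℂ) :=
  Ideal.span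
    { X 7 + X 0 * X 10 + X 3,   -- c₂ + a₁ d₂ + b₁
      X 8 + X 0 * X 11 + X 3,   -- c₃ + a₁ d₃ + b₁
      X 6 + X 1 * X 9 + X 4,    -- c₁ + a₂ d₁ + b₂
      X 8 + X 1 * X 11 + X 4,   -- c₃ + a₂ d₃ + b₂
      X 6 + X 2 * X 9 + X 5,    -- c₁ + a₃ d₁ + b₃
      X 7 + X 2 * X 10 + X 5 }  -- c₂ + a₃ d₂ + b₃

namespace IncidenceAux

noncomputable section

abbrev R12 := MvPolynomial (Fin 12) ℂ
abbrev S7 := MvPolynomial (Fin 7) ℂ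
abbrev A6 := MvPolynomial (Fin 6) ℂ

/-- The key quadric relation. -/
def fpoly : S7 := (X 1 - X 2) * X 4 + (X 2 - X 0) * X 5 + (X 0 - X 1) * X 6

/-- A rank-4 quadric in normal form. -/
def gpoly : S7 := X 0 * X 1 + X 2 * X 3

/-- The substitution eliminating variables 4,5,6,7,8. -/
def sv : Fin 12 → S7 :=
  ![X 0, X 1, X 2, X 3,
    X 3 + (X 0 - X 1) * X 6,
    X 3 + (X 0 - X 1) * X 6 + (X 1 - X 2) * X 4,
    -(X 1 * X 4 + (X 3 + (X 0 - X 1) * X 6)),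
    -(X 0 * X 5 + X 3),
    -(X 0 * X 6 + X 3),
    X 4, X 5, X 6]

@[simp] lemma sv0 : sv 0 = X 0 := rfl
@[simp] lemma sv1 : sv 1 = X 1 := rfl
@[simp] lemma sv2 : sv 2 = X 2 := rfl
@[simp] lemma sv3 : sv 3 = X 3 := rfl
@[simp] lemma sv4 : sv 4 = X 3 + (X 0 - X 1) * X 6 := rfl
@[simp] lemma sv5 : sv 5 = X 3 + (X 0 - X 1) * X 6 + (X 1 - X 2) * X 4 := rfl
@[simp] lemma sv6 : sv 6 = -(X 1 * X 4 + (X 3 + (X 0 - X 1) * X 6)) := rfl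
@[simp] lemma sv7 : sv 7 = -(X 0 * X 5 + X 3) := rfl
@[simp] lemma sv8 : sv 8 = -(X 0 * X 6 + X 3) := rfl
@[simp] lemma sv9 : sv 9 = X 4 := rfl
@[simp] lemma sv10 : sv 10 = X 5 := rfl
@[simp] lemma sv11 : sv 11 = X 6 := rfl

def φ : R12 →ₐ[ℂ] S7 := aeval sv

/-- Section of `φ`. -/
def iv : Fin 7 → R12 := ![X 0, X 1, X 2, X 3, X 9, X 10, X 11]

@[simp] lemma iv0 : iv 0 = X 0 := rfl
@[simp] lemma iv1 : iv 1 = X 1 := rfl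
@[simp] lemma iv2 : iv 2 = X 2 := rfl
@[simp] lemma iv3 : iv 3 = X 3 := rfl
@[simp] lemma iv4 : iv 4 = X 9 := rfl
@[simp] lemma iv5 : iv 5 = X 10 := rfl
@[simp] lemma iv6 : iv 6 = X 11 := rfl

def ι : S7 →ₐ[ℂ] R12 := aeval iv

/-! ### Linear change of variables turning `gpoly` into `fpoly` -/

def tv : Fin 7 → S7 := ![X 1 - X 2, X 4 - X 6, X 2 - X 0, X 5 - X 6, X 0, X 6, X 3]
def uv : Fin 7 → S7 := ![X 4, X 0 + X 2 + X 4, X 2 + X 4, X 6, X 1 + X 5, X 3 + X 5, X 5]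

@[simp] lemma tv0 : tv 0 = X 1 - X 2 := rfl
@[simp] lemma tv1 : tv 1 = X 4 - X 6 := rfl
@[simp] lemma tv2 : tv 2 = X 2 - X 0 := rfl
@[simp] lemma tv3 : tv 3 = X 5 - X 6 := rfl
@[simp] lemma tv4 : tv 4 = X 0 := rfl
@[simp] lemma tv5 : tv 5 = X 6 := rfl
@[simp] lemma tv6 : tv 6 = X 3 := rfl
@[simp] lemma uv0 : uv 0 = X 4 := rfl
@[simp] lemma uv1 : uv 1 = X 0 + X 2 + X 4 := rfl
@[simp] lemma uv2 : uv 2 = X 2 + X 4 := rfl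
@[simp] lemma uv3 : uv 3 = X 6 := rfl
@[simp] lemma uv4 : uv 4 = X 1 + X 5 := rfl
@[simp] lemma uv5 : uv 5 = X 3 + X 5 := rfl
@[simp] lemma uv6 : uv 6 = X 5 := rfl

def τ : S7 ≃ₐ[ℂ] S7 :=
  AlgEquiv.ofAlgHom (aeval tv) (aeval uv)
    (by apply MvPolynomial.algHom_ext; intro i; fin_cases i <;> simp)
    (by apply MvPolynomial.algHom_ext; intro i; fin_cases i <;> simp)

lemma τ_g : τ gpoly = fpoly := by
  show aeval tv gpoly = fpoly
  simp [gpoly, fpoly]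
  ring

/-! ### Primality of `fpoly` -/

lemma prime_X0_A6 : Prime (X 0 : A6) := by
  have h : Prime ((finSuccEquiv ℂ 5).toRingEquiv.toMulEquiv (X 0 : A6)) := by
    show Prime (finSuccEquiv ℂ 5 (X 0 : A6))
    rw [finSuccEquiv_X_zero]
    exact Polynomial.prime_X
  exact (MulEquiv.prime_iff (finSuccEquiv ℂ 5).toRingEquiv.toMulEquiv).mp h

lemma X0_not_dvd_X1 : ¬ (X 0 : A6) ∣ X 1 := by
  rintro ⟨q, hq⟩
  have := congrArg (eval (fun i : Fin 6 => if i = 0 then (0 : ℂ) else 1)) hq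
  simp at this

lemma X0_not_dvd_X2 : ¬ (X 0 : A6) ∣ X 2 := by
  rintro ⟨q, hq⟩
  have := congrArg (eval (fun i : Fin 6 => if i = 0 then (0 : ℂ) else 1)) hq
  simp at this

/-- The linear polynomial `X0 · T + X1·X2` is primitive. -/
lemma isPrimitive_p :
    (Polynomial.C (X 0 : A6) * Polynomial.X + Polynomial.C (X 1 * X 2)).IsPrimitive := by
  rw [Polynomial.isPrimitive_iff_isUnit_of_C_dvd]
  intro r hr
  have hco := (Polynomial.C_dvd_iff_dvd_coeff r _).mp hr
  have h1 : r ∣ (X 0 : A6) := by simpa using hco 1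
  have h0 : r ∣ (X 1 * X 2 : A6) := by simpa using hco 0
  obtain ⟨s, hs⟩ := h1
  rcases prime_X0_A6.2.2 r s (hs ▸ dvd_rfl) with h | h
  · exfalso
    rcases prime_X0_A6.2.2 _ _ (h.trans h0) with h' | h'
    · exact X0_not_dvd_X1 h'
    · exact X0_not_dvd_X2 h'
  · obtain ⟨t, ht⟩ := h
    have hcan : (X 0 : A6) * 1 = X 0 * (t * r) := by
      rw [mul_one]
      nth_rewrite 1 [hs]
      rw [ht]; ring
    have h1' : (1 : A6) = t * r := mul_left_cancel₀ (X_ne_zero (0 : Fin 6)) hcan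
    exact IsUnit.of_mul_eq_one t (by rw [mul_comm]; exact h1'.symm)

lemma irreducible_p :
    Irreducible (Polynomial.C (X 0 : A6) * Polynomial.X + Polynomial.C (X 1 * X 2)) := by
  set K := FractionRing A6
  apply isPrimitive_p.irreducible_of_irreducible_map_of_injective
    (IsFractionRing.injective A6 K)
  have hmap : (Polynomial.C (X 0 : A6) * Polynomial.X + Polynomial.C (X 1 * X 2)).map
      (algebraMap A6 K)
      = Polynomial.C (algebraMap A6 K (X 0)) * Polynomial.X
        + Polynomial.C (algebraMap A6 K (X 1 * X 2)) := by
    rw [Polynomial.map_add, Polynomial.map_mul, Polynomial.map_C, Polynomial.map_C,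
      Polynomial.map_X]
  rw [hmap]
  apply Polynomial.irreducible_of_degree_eq_one
  apply Polynomial.degree_linear
  set_option linter.unnecessarySimpa false in simpa using (IsFractionRing.injective A6 K).ne_iff.mpr (X_ne_zero (R := ℂ) (0 : Fin 6))
  -- (the `simpa` normalises `≠ algebraMap _ _ 0` to `≠ 0`)

lemma irreducible_g : Irreducible gpoly := by
  have he : finSuccEquiv ℂ 6 gpoly
      = Polynomial.C (X 0 : A6) * Polynomial.X + Polynomial.C (X 1 * X 2) := by
    have h1 : (1 : Fin 7) = Fin.succ 0 := rfl
    have h2 : (2 : Fin 7) = Fin.succ 1 := rfl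
    have h3 : (3 : Fin 7) = Fin.succ 2 := rfl
    rw [gpoly, map_add, map_mul, map_mul, finSuccEquiv_X_zero, h1, h2, h3,
      finSuccEquiv_X_succ, finSuccEquiv_X_succ, finSuccEquiv_X_succ, ← Polynomial.C_mul]
    ring
  have h2 : Irreducible ((finSuccEquiv ℂ 6).toRingEquiv.toMulEquiv gpoly) := by
    show Irreducible (finSuccEquiv ℂ 6 gpoly)
    rw [he]; exact irreducible_p
  exact (MulEquiv.irreducible_iff _).mp h2

lemma prime_f : Prime fpoly := by
  have hg : Prime gpoly := by
    haveI : UniqueFactorizationMonoid S7 := inferInstance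
    exact UniqueFactorizationMonoid.irreducible_iff_prime.mp irreducible_g
  have : Prime (τ.toRingEquiv.toMulEquiv gpoly) :=
    (MulEquiv.prime_iff τ.toRingEquiv.toMulEquiv).mpr hg
  rwa [show τ.toRingEquiv.toMulEquiv gpoly = fpoly from τ_g] at this

/-! ### The kernel computation -/

lemma span_fpoly_isPrime : (Ideal.span ({fpoly} : Set S7)).IsPrime :=
  (Ideal.span_singleton_prime prime_f.ne_zero).mpr prime_f

def ψ : R12 →+* S7 ⧸ Ideal.span ({fpoly} : Set S7) :=
  (Ideal.Quotient.mk _).comp φ.toRingHom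

lemma mem_of_eq {a b : R12} (h : a = b) (hb : b ∈ incidenceIdeal) :
    a ∈ incidenceIdeal := h ▸ hb

lemma hg1 : (X 7 + X 0 * X 10 + X 3 : R12) ∈ incidenceIdeal :=
  Ideal.subset_span (Set.mem_insert _ _)
lemma hg2 : (X 8 + X 0 * X 11 + X 3 : R12) ∈ incidenceIdeal :=
  Ideal.subset_span (Set.mem_insert_of_mem _ (Set.mem_insert _ _))
lemma hg3 : (X 6 + X 1 * X 9 + X 4 : R12) ∈ incidenceIdeal :=
  Ideal.subset_span (Set.mem_insert_of_mem _ (Set.mem_insert_of_mem _ (Set.mem_insert _ _)))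
lemma hg4 : (X 8 + X 1 * X 11 + X 4 : R12) ∈ incidenceIdeal :=
  Ideal.subset_span (Set.mem_insert_of_mem _ (Set.mem_insert_of_mem _
    (Set.mem_insert_of_mem _ (Set.mem_insert _ _))))
lemma hg5 : (X 6 + X 2 * X 9 + X 5 : R12) ∈ incidenceIdeal :=
  Ideal.subset_span (Set.mem_insert_of_mem _ (Set.mem_insert_of_mem _
    (Set.mem_insert_of_mem _ (Set.mem_insert_of_mem _ (Set.mem_insert _ _)))))
lemma hg6 : (X 7 + X 2 * X 10 + X 5 : R12) ∈ incidenceIdeal :=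
  Ideal.subset_span (Set.mem_insert_of_mem _ (Set.mem_insert_of_mem _
    (Set.mem_insert_of_mem _ (Set.mem_insert_of_mem _
      (Set.mem_insert_of_mem _ rfl)))))

lemma hιf : ι fpoly ∈ incidenceIdeal := by
  apply mem_of_eq (b := ((X 8 + X 0 * X 11 + X 3) + (X 6 + X 1 * X 9 + X 4)
      + (X 7 + X 2 * X 10 + X 5)) - (X 7 + X 0 * X 10 + X 3)
      - (X 8 + X 1 * X 11 + X 4) - (X 6 + X 2 * X 9 + X 5))
  · simp [ι, fpoly]
    ring
  · exact sub_mem (sub_mem (sub_mem (add_mem (add_mem hg2 hg3) hg6) hg1) hg4) hg5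

lemma f12_0 : (⟨0, by omega⟩ : Fin 12) = 0 := rfl
lemma f12_1 : (⟨1, by omega⟩ : Fin 12) = 1 := rfl
lemma f12_2 : (⟨2, by omega⟩ : Fin 12) = 2 := rfl
lemma f12_3 : (⟨3, by omega⟩ : Fin 12) = 3 := rfl
lemma f12_4 : (⟨4, by omega⟩ : Fin 12) = 4 := rfl
lemma f12_5 : (⟨5, by omega⟩ : Fin 12) = 5 := rfl
lemma f12_6 : (⟨6, by omega⟩ : Fin 12) = 6 := rfl
lemma f12_7 : (⟨7, by omega⟩ : Fin 12) = 7 := rfl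
lemma f12_8 : (⟨8, by omega⟩ : Fin 12) = 8 := rfl
lemma f12_9 : (⟨9, by omega⟩ : Fin 12) = 9 := rfl
lemma f12_10 : (⟨10, by omega⟩ : Fin 12) = 10 := rfl
lemma f12_11 : (⟨11, by omega⟩ : Fin 12) = 11 := rfl

lemma e0 : ι (φ (X 0)) = (X 0 : R12) := by simp [φ, ι]
lemma e1 : ι (φ (X 1)) = (X 1 : R12) := by simp [φ, ι]
lemma e2 : ι (φ (X 2)) = (X 2 : R12) := by simp [φ, ι]
lemma e3 : ι (φ (X 3)) = (X 3 : R12) := by simp [φ, ι]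
lemma e4 : ι (φ (X 4)) = (X 3 + (X 0 - X 1) * X 11 : R12) := by simp [φ, ι]; try ring
lemma e5 : ι (φ (X 5)) = (X 3 + (X 0 - X 1) * X 11 + (X 1 - X 2) * X 9 : R12) := by
  simp [φ, ι]; try ring
lemma e6 : ι (φ (X 6)) = (-(X 1 * X 9 + (X 3 + (X 0 - X 1) * X 11)) : R12) := by
  simp [φ, ι]; try ring
lemma e7 : ι (φ (X 7)) = (-(X 0 * X 10 + X 3) : R12) := by simp [φ, ι]; try ring
lemma e8 : ι (φ (X 8)) = (-(X 0 * X 11 + X 3) : R12) := by simp [φ, ι]; try ring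
lemma e9 : ι (φ (X 9)) = (X 9 : R12) := by simp [φ, ι]
lemma e10 : ι (φ (X 10)) = (X 10 : R12) := by simp [φ, ι]
lemma e11 : ι (φ (X 11)) = (X 11 : R12) := by simp [φ, ι]

lemma hsub (p : R12) : p - ι (φ p) ∈ incidenceIdeal := by
  have hA : (Ideal.Quotient.mkₐ ℂ incidenceIdeal).comp (ι.comp φ)
      = Ideal.Quotient.mkₐ ℂ incidenceIdeal := by
    apply MvPolynomial.algHom_ext
    intro i
    fin_cases i <;>
      simp only [AlgHom.comp_apply, Ideal.Quotient.mkₐ_eq_mk,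
        f12_0, f12_1, f12_2, f12_3, f12_4, f12_5, f12_6, f12_7, f12_8, f12_9, f12_10, f12_11,
        e0, e1, e2, e3, e4, e5, e6, e7, e8, e9, e10, e11]
    · -- i = 4
      rw [Ideal.Quotient.eq]
      exact mem_of_eq (by ring)
        (sub_mem hg2 hg4)
    · -- i = 5
      rw [Ideal.Quotient.eq]
      exact mem_of_eq (by ring)
        (add_mem (sub_mem hg3 hg5) (sub_mem hg2 hg4))
    · -- i = 6
      rw [Ideal.Quotient.eq]
      exact mem_of_eq (by ring)
        (sub_mem (sub_mem hg4 hg3) hg2)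
    · -- i = 7
      rw [Ideal.Quotient.eq]
      exact mem_of_eq (by ring) (neg_mem hg1)
    · -- i = 8
      rw [Ideal.Quotient.eq]
      exact mem_of_eq (by ring) (neg_mem hg2)
  have h := DFunLike.congr_fun hA p
  simp only [AlgHom.comp_apply, Ideal.Quotient.mkₐ_eq_mk] at h
  have h2 : ι (φ p) - p ∈ incidenceIdeal := (Ideal.Quotient.eq).mp h
  have := neg_mem h2
  simpa using this

lemma ker_eq : incidenceIdeal = RingHom.ker ψ := by
  apply le_antisymm
  · rw [incidenceIdeal, Ideal.span_le]
    rintro p hp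
    simp only [Set.mem_insert_iff, Set.mem_singleton_iff] at hp
    have hz : ∀ q : R12, φ q = 0 → q ∈ RingHom.ker ψ := by
      intro q hq
      rw [RingHom.mem_ker]
      show Ideal.Quotient.mk _ (φ q) = 0
      rw [hq, map_zero]
    rcases hp with rfl | rfl | rfl | rfl | rfl | rfl
    · exact hz _ (by simp [φ]; try ring)
    · exact hz _ (by simp [φ]; try ring)
    · exact hz _ (by simp [φ]; try ring)
    · exact hz _ (by simp [φ]; try ring)
    · exact hz _ (by simp [φ]; try ring)
    · rw [SetLike.mem_coe, RingHom.mem_ker]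
      show Ideal.Quotient.mk _ (φ _) = 0
      have hφ : φ (X 7 + X 2 * X 10 + X 5 : R12) = fpoly := by
        simp [φ, fpoly]
        ring
      rw [hφ]
      exact Ideal.Quotient.eq_zero_iff_mem.mpr (Ideal.subset_span rfl)
  · intro p hp
    rw [RingHom.mem_ker] at hp
    have hmem : φ p ∈ Ideal.span ({fpoly} : Set S7) :=
      Ideal.Quotient.eq_zero_iff_mem.mp hp
    obtain ⟨q, hq⟩ := Ideal.mem_span_singleton.mp hmem
    have h2 : ι (φ p) ∈ incidenceIdeal := by
      rw [hq, map_mul]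
      exact Ideal.mul_mem_right _ _ hιf
    have h3 := add_mem (hsub p) h2
    simpa using h3

end

end IncidenceAux

/-- The ideal generated by the six incidence polynomials defining the space of
triangles `I₃,₃` is prime. -/
theorem incidenceIdeal_isPrime : incidenceIdeal.IsPrime := by
  haveI := IncidenceAux.span_fpoly_isPrime
  rw [IncidenceAux.ker_eq]
  exact RingHom.ker_isPrime _
end
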